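/- Let λ > 0 be a real number and let m be a natural number with λ ≤ m. Then there exists a real number a ∈ (0, λ) such that ∑_{k=m}^{∞} e^{−λ}·λ^k/k! = e^{−a}·λ^m/m!. -/

import Mathlib

/-- Exact form of the Poisson tail: for `0 < λ ≤ m` there is `a ∈ (0, λ)` with
`∑_{k=m}^∞ e^{-λ} λ^k / k! = e^{-a} λ^m / m!`. -/
theorem poisson_tail_exact_form (lam : ℝ) (hlam : 0 < lam) (m : ℕ) (hm : lam ≤ m) :
    ∃ a ∈ Set.Ioo (0 : ℝ) lam,
      (∑' k : ℕ, Real.exp (-lam) * lam ^ (m + k) / (Nat.factorial (m + k))) =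
        Real.exp (-a) * lam ^ m / (Nat.factorial m) := by
  have hm1 : 1 ≤ m := by
    by_contra h
    push_neg at h
    interval_cases m
    · simp at hm; linarith
  set f : ℕ → ℝ := fun k => Real.exp (-lam) * lam ^ (m + k) / (Nat.factorial (m + k)) with hf
  have hfpos : ∀ k, 0 < f k := fun k => by
    apply div_pos (mul_pos (Real.exp_pos _) (pow_pos hlam _))
    exact_mod_cast Nat.factorial_pos _
  -- dominating sequence
  set g : ℕ → ℝ := fun k => (Real.exp (-lam) * lam ^ m / (Nat.factorial m)) * (lam ^ k / (Nat.factorial k)) with hg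
  have hgsum : Summable g := (Real.summable_pow_div_factorial lam).mul_left _
  have hfg : ∀ k, f k ≤ g k := by
    intro k
    have hfac : (Nat.factorial m : ℝ) * (Nat.factorial k) ≤ (Nat.factorial (m + k)) := by
      exact_mod_cast Nat.le_of_dvd (Nat.factorial_pos _) (Nat.factorial_mul_factorial_dvd_factorial_add m k)
    have h1 : (0:ℝ) < (Nat.factorial m : ℝ) * (Nat.factorial k) := by positivity
    have h2 : (0:ℝ) < (Nat.factorial (m+k) : ℝ) := by positivity
    have hnum : 0 ≤ Real.exp (-lam) * lam ^ (m + k) := by positivity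
    calc f k = Real.exp (-lam) * lam ^ (m + k) / (Nat.factorial (m + k)) := rfl
      _ ≤ Real.exp (-lam) * lam ^ (m + k) / ((Nat.factorial m : ℝ) * (Nat.factorial k)) :=
          div_le_div_of_nonneg_left hnum h1 hfac
      _ = g k := by
          rw [hg]; simp only [pow_add]; field_simp
  have hfg1 : f 1 < g 1 := by
    have hfac : (Nat.factorial m : ℝ) * (Nat.factorial 1) < (Nat.factorial (m + 1)) := by
      have : Nat.factorial m * Nat.factorial 1 < Nat.factorial (m+1) := by
        rw [Nat.factorial_one, mul_one]
        exact (Nat.factorial_lt (by omega)).mpr (by omega)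
      exact_mod_cast this
    have h1 : (0:ℝ) < (Nat.factorial m : ℝ) * (Nat.factorial 1) := by positivity
    have hnum : 0 < Real.exp (-lam) * lam ^ (m + 1) := by positivity
    calc f 1 = Real.exp (-lam) * lam ^ (m + 1) / (Nat.factorial (m + 1)) := rfl
      _ < Real.exp (-lam) * lam ^ (m + 1) / ((Nat.factorial m : ℝ) * (Nat.factorial 1)) :=
          div_lt_div_of_pos_left hnum h1 hfac
      _ = g 1 := by rw [hg]; simp only [pow_add]; field_simp
  have hfsum : Summable f := Summable.of_nonneg_of_le (fun k => (hfpos k).le) hfg hgsum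
  -- the tail sum
  set S : ℝ := ∑' k, f k with hS
  have hexp : Real.exp lam = ∑' k : ℕ, lam ^ k / (Nat.factorial k) := by
    rw [Real.exp_eq_exp_ℝ, NormedSpace.exp_eq_tsum_div]
  have hgtsum : ∑' k, g k = lam ^ m / (Nat.factorial m) := by
    rw [hg, tsum_mul_left, ← hexp]
    rw [Real.exp_neg]
    field_simp
  -- upper bound
  have hupper : S < lam ^ m / (Nat.factorial m) := by
    rw [hS, ← hgtsum]
    exact Summable.tsum_lt_tsum_of_nonneg (fun k => (hfpos k).le) hfg hfg1 hgsum
  -- lower bound : S > f 0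
  have hlower : Real.exp (-lam) * lam ^ m / (Nat.factorial m) < S := by
    have h0 : f 0 = Real.exp (-lam) * lam ^ m / (Nat.factorial m) := by simp [hf]
    have h01 : f 0 + f 1 ≤ S := by
      have := Summable.sum_le_tsum (f := f) {0, 1} (fun i _ => (hfpos i).le) hfsum
      simpa using this
    nlinarith [hfpos 1]
  have hSpos : 0 < S := lt_trans (by positivity) hlower
  have hmfac : (0:ℝ) < (Nat.factorial m : ℝ) := by positivity
  have hlampow : (0:ℝ) < lam ^ m := pow_pos hlam m
  set a : ℝ := Real.log (lam ^ m / ((Nat.factorial m) * S)) with ha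
  have hargpos : 0 < lam ^ m / ((Nat.factorial m) * S) := by positivity
  refine ⟨a, ⟨?_, ?_⟩, ?_⟩
  · apply Real.log_pos
    rw [lt_div_iff₀ (by positivity), one_mul]
    calc (Nat.factorial m : ℝ) * S < (Nat.factorial m : ℝ) * (lam ^ m / (Nat.factorial m)) :=
          (mul_lt_mul_iff_right₀ hmfac).2 hupper
      _ = lam ^ m := by field_simp
  · rw [ha, Real.log_lt_iff_lt_exp hargpos, div_lt_iff₀ (by positivity)]
    have : Real.exp (-lam) * lam ^ m < (Nat.factorial m : ℝ) * S := by
      have := (mul_lt_mul_iff_right₀ hmfac).2 hlower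
      calc Real.exp (-lam) * lam ^ m
          = (Nat.factorial m : ℝ) * (Real.exp (-lam) * lam ^ m / (Nat.factorial m)) := by field_simp
        _ < (Nat.factorial m : ℝ) * S := this
    have h2 := mul_lt_mul_of_pos_left this (Real.exp_pos lam)
    calc lam ^ m = Real.exp lam * (Real.exp (-lam) * lam ^ m) := by
          rw [← mul_assoc, ← Real.exp_add]; simp
      _ < Real.exp lam * ((Nat.factorial m : ℝ) * S) := h2
  · rw [ha, Real.exp_neg, Real.exp_log hargpos]
    field_simp
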